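/- Let H be a real Hilbert space, c ∈ H, r > 0, x̄ ∈ H with ‖x̄ − c‖ > r. Then for every y ∈ H, the graphical derivative of P_{B(c,r)} at x̄ satisfies DP_{B(c,r)}(x̄)(y) = { (r/‖x̄ − c‖)(y − (⟨x̄ − c, y⟩/‖x̄ − c‖²)(x̄ − c)) }. -/

import Mathlib

open RealInnerProductSpace Filter Metric

/-- `P` is the metric projection (nearest-point map) onto `C`. -/
def IsMetricProj {H : Type*} [NormedAddCommGroup H] [InnerProductSpace ℝ H]
    (C : Set H) (P : H → H) : Prop :=
  ∀ x : H, P x ∈ C ∧ ∀ w ∈ C, ‖x - P x‖ ≤ ‖x - w‖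

/-- The set `D̂*f(xb)(y)` characterized by the limsup inequality. -/
def coderivSet {H : Type*} [NormedAddCommGroup H] [InnerProductSpace ℝ H]
    (f : H → H) (xb y : H) : Set H :=
  {z | ∀ ε > (0:ℝ), ∃ δ > (0:ℝ), ∀ u : H, u ≠ xb → ‖u - xb‖ < δ →
    (⟪z, u - xb⟫ - ⟪y, f u - f xb⟫) / ‖u - xb‖ < ε}

/-- The (Fréchet) regular normal cone via the limsup inequality. -/
def regNormalCone {E : Type*} [NormedAddCommGroup E] [InnerProductSpace ℝ E]
    (Ω : Set E) (w : E) : Set E :=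
  {v | ∀ ε > (0:ℝ), ∃ δ > (0:ℝ), ∀ u ∈ Ω, u ≠ w → ‖u - w‖ < δ →
    ⟪v, u - w⟫ / ‖u - w‖ < ε}

/-- The Bouligand (contingent) tangent cone. -/
def bouligandTangentCone {E : Type*} [NormedAddCommGroup E] [NormedSpace ℝ E]
    (Ω : Set E) (w : E) : Set E :=
  {z | ∃ t : ℕ → ℝ, ∃ s : ℕ → E, (∀ n, 0 < t n) ∧
    Tendsto t atTop (nhds 0) ∧ Tendsto s atTop (nhds z) ∧ ∀ n, w + t n • s n ∈ Ω}

section Aux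
variable {H : Type*} [NormedAddCommGroup H] [InnerProductSpace ℝ H]

/-- projection formula -/
lemma projFormula (c : H) (r : ℝ) (hr : 0 < r) (P : H → H)
    (hP : ∀ x : H, P x ∈ closedBall c r ∧ ∀ w ∈ closedBall c r, ‖x - P x‖ ≤ ‖x - w‖)
    (x : H) (hx : r < ‖x - c‖) :
    P x = c + (r / ‖x - c‖) • (x - c) := by
  set R := ‖x - c‖ with hR
  have hR0 : 0 < R := hr.trans hx
  set w0 : H := c + (r / R) • (x - c) with hw0def
  have hw0mem : w0 ∈ closedBall c r := by
    simp only [mem_closedBall, dist_eq_norm, hw0def, add_sub_cancel_left, norm_smul,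
      Real.norm_eq_abs, abs_div, abs_of_pos hr, abs_of_pos hR0]
    rw [← hR]
    field_simp
    exact le_rfl
  have hxw0 : ‖x - w0‖ = R - r := by
    have hxe : x - w0 = (1 - r / R) • (x - c) := by rw [hw0def]; module
    have h1 : (0:ℝ) ≤ 1 - r / R := by
      rw [sub_nonneg]; exact (div_le_one hR0).2 hx.le
    rw [hxe, norm_smul, Real.norm_eq_abs, ← hR, abs_of_nonneg h1]
    field_simp
  have hmin : ∀ w ∈ closedBall c r, R - r ≤ ‖x - w‖ := by
    intro w hw
    rw [mem_closedBall, dist_comm, dist_eq_norm, norm_sub_rev] at hw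
    have : R - ‖w - c‖ ≤ ‖(x - c) - (w - c)‖ := by
      have := norm_sub_norm_le (x - c) (w - c)
      linarith
    have he : (x - c) - (w - c) = x - w := by abel
    rw [he] at this
    linarith
  obtain ⟨hPmem, hPmin⟩ := hP x
  have hPx : ‖x - P x‖ = R - r :=
    le_antisymm (hxw0 ▸ hPmin w0 hw0mem) (hmin _ hPmem)
  -- midpoint
  set m : H := (1/2 : ℝ) • (P x + w0) with hm
  have hmmem : m ∈ closedBall c r := by
    have := (convex_closedBall c r) hPmem hw0mem (by norm_num : (0:ℝ) ≤ 1/2)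
      (by norm_num : (0:ℝ) ≤ 1/2) (by norm_num)
    convert this using 1
    rw [hm]; module
  have hmdist : R - r ≤ ‖x - m‖ := hmin m hmmem
  have hpar := parallelogram_law_with_norm ℝ (x - P x) (x - w0)
  have hsum : (x - P x) + (x - w0) = (2:ℝ) • (x - m) := by rw [hm]; module
  have hdiff : (x - P x) - (x - w0) = w0 - P x := by abel
  rw [hsum, hdiff, hPx, hxw0] at hpar
  have h2 : ‖(2:ℝ) • (x - m)‖ = 2 * ‖x - m‖ := by
    rw [norm_smul]; simp
  rw [h2] at hpar
  have hnn : (0:ℝ) ≤ ‖x - m‖ := norm_nonneg _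
  have hz : ‖w0 - P x‖ = 0 := by nlinarith [norm_nonneg (w0 - P x)]
  have : w0 = P x := by rwa [norm_eq_zero, sub_eq_zero] at hz
  rw [← this]

lemma hasFDeriv_g (c : H) (r : ℝ) (xb : H) (h : xb ≠ c) :
    ∃ A : H →L[ℝ] H, HasFDerivAt (fun x => c + (r / ‖x - c‖) • (x - c)) A xb ∧
      ∀ y : H, A y = (r / ‖xb - c‖) • (y - (⟪xb - c, y⟫ / ‖xb - c‖ ^ 2) • (xb - c)) := by
  have hu : xb - c ≠ 0 := sub_ne_zero.2 h
  set R := ‖xb - c‖ with hRdef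
  have hR0 : 0 < R := norm_pos_iff.2 hu
  have h1 : HasFDerivAt (fun x : H => x - c) (ContinuousLinearMap.id ℝ H) xb :=
    (hasFDerivAt_id xb).sub_const c
  have h2 : HasFDerivAt (fun x : H => ‖x - c‖ ^ 2)
      (2 • (innerSL ℝ (xb - c)).comp (ContinuousLinearMap.id ℝ H)) xb := h1.norm_sq
  have hne : (R ^ 2 : ℝ) ≠ 0 := by positivity
  have hsne : Real.sqrt (R ^ 2) ≠ 0 := by
    rw [Real.sqrt_sq hR0.le]; exact hR0.ne'
  have hsq0 : HasDerivAt (fun t : ℝ => (Real.sqrt t)⁻¹)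
      (-(1 / (2 * Real.sqrt (R ^ 2))) / Real.sqrt (R ^ 2) ^ 2) (R ^ 2) :=
    (Real.hasDerivAt_sqrt hne).inv hsne
  have hsq : HasDerivAt (fun t : ℝ => r / Real.sqrt t)
      (r * (-(1 / (2 * Real.sqrt (R ^ 2))) / Real.sqrt (R ^ 2) ^ 2)) (R ^ 2) := by
    simp only [div_eq_mul_inv]
    exact hsq0.const_mul r
  have h3 := hsq.comp_hasFDerivAt xb h2
  have h4 : HasFDerivAt (fun x : H => r / ‖x - c‖)
      ((r * (-(1 / (2 * Real.sqrt (R ^ 2))) / Real.sqrt (R ^ 2) ^ 2)) •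
        (2 • (innerSL ℝ (xb - c)).comp (ContinuousLinearMap.id ℝ H))) xb := by
    refine h3.congr_of_eventuallyEq (Filter.Eventually.of_forall fun z => ?_)
    simp [Function.comp, Real.sqrt_sq (norm_nonneg _)]
  have h5 := (h4.smul h1).const_add c
  refine ⟨_, h5, fun y => ?_⟩
  simp only [ContinuousLinearMap.add_apply, ContinuousLinearMap.smul_apply,
    ContinuousLinearMap.smulRight_apply, ContinuousLinearMap.coe_smul', Pi.smul_apply,
    ContinuousLinearMap.coe_comp', Function.comp_apply, ContinuousLinearMap.coe_id', id_eq,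
    innerSL_apply_apply, Real.sqrt_sq hR0.le, smul_eq_mul, nsmul_eq_mul, Nat.cast_ofNat,
    ContinuousLinearMap.id_apply]
  match_scalars <;> field_simp <;> ring

lemma quot_tendsto {g : H → H} {A : H →L[ℝ] H} {xb : H} (hA : HasFDerivAt g A xb)
    (t : ℕ → ℝ) (htpos : ∀ n, 0 < t n) (ht0 : Tendsto t atTop (nhds 0))
    (v : ℕ → H) (y : H) (hv : Tendsto v atTop (nhds y)) :
    Tendsto (fun n => (t n)⁻¹ • (g (xb + t n • v n) - g xb)) atTop (nhds (A y)) := by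
  set hn : ℕ → H := fun n => t n • v n with hhn
  have hh0 : Tendsto hn atTop (nhds (0 : H)) := by
    have := ht0.smul hv
    rwa [zero_smul] at this
  have hdecomp : ∀ n, (t n)⁻¹ • (g (xb + hn n) - g xb)
      = A (v n) + (t n)⁻¹ • (g (xb + hn n) - g xb - A (hn n)) := by
    intro n
    have hAhn : A (hn n) = t n • A (v n) := by rw [hhn]; simp [map_smul]
    rw [hAhn]
    have ht := (htpos n).ne'
    match_scalars <;> field_simp <;> ring
  have hAv : Tendsto (fun n => A (v n)) atTop (nhds (A y)) :=
    (A.continuous.tendsto y).comp hv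
  have hrem : Tendsto (fun n => (t n)⁻¹ • (g (xb + hn n) - g xb - A (hn n))) atTop
      (nhds (0 : H)) := by
    rw [NormedAddCommGroup.tendsto_nhds_zero]
    intro ε hε
    set M : ℝ := ‖y‖ + 1 with hM
    have hM0 : 0 < M := by positivity
    have hvb : ∀ᶠ n in atTop, ‖v n‖ ≤ M := by
      have hlt : ‖y‖ < M := lt_add_one _
      exact hv.norm.eventually_le_const hlt
    have hlo := (hasFDerivAt_iff_isLittleO_nhds_zero.1 hA).def
      (show (0:ℝ) < ε / (2 * M) by positivity)
    have hev := (hh0.eventually hlo).and hvb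
    filter_upwards [hev] with n ⟨h1, h2⟩
    have htn := htpos n
    have hhn_norm : ‖hn n‖ ≤ t n * M := by
      rw [hhn]
      calc ‖t n • v n‖ = |t n| * ‖v n‖ := by rw [norm_smul, Real.norm_eq_abs]
        _ = t n * ‖v n‖ := by rw [abs_of_pos htn]
        _ ≤ t n * M := by gcongr
    have hrem_norm : ‖g (xb + hn n) - g xb - A (hn n)‖ ≤ ε / 2 * t n := by
      calc ‖g (xb + hn n) - g xb - A (hn n)‖ ≤ ε / (2 * M) * ‖hn n‖ := by
            simpa using h1
        _ ≤ ε / (2 * M) * (t n * M) := by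
            apply mul_le_mul_of_nonneg_left hhn_norm (by positivity)
        _ = ε / 2 * t n := by field_simp
    calc ‖(t n)⁻¹ • (g (xb + hn n) - g xb - A (hn n))‖
        = (t n)⁻¹ * ‖g (xb + hn n) - g xb - A (hn n)‖ := by
          rw [norm_smul, Real.norm_eq_abs, abs_inv, abs_of_pos htn]
      _ ≤ (t n)⁻¹ * (ε / 2 * t n) := by
          apply mul_le_mul_of_nonneg_left hrem_norm (by positivity)
      _ = ε / 2 := by field_simp
      _ < ε := by linarith
  have := hAv.add hrem
  rw [add_zero] at this
  exact this.congr fun n => (hdecomp n).symm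

theorem main (c : H) (r : ℝ) (hr : 0 < r) (xb : H) (hx : r < ‖xb - c‖)
    (P : H → H)
    (hP : ∀ x : H, P x ∈ closedBall c r ∧ ∀ w ∈ closedBall c r, ‖x - P x‖ ≤ ‖x - w‖)
    (y : H)
    (projFormula : ∀ x : H, r < ‖x - c‖ → P x = c + (r / ‖x - c‖) • (x - c))
    (hasFDeriv_g : ∃ A : H →L[ℝ] H,
      HasFDerivAt (fun x => c + (r / ‖x - c‖) • (x - c)) A xb ∧
      ∀ y : H, A y = (r / ‖xb - c‖) • (y - (⟪xb - c, y⟫ / ‖xb - c‖ ^ 2) • (xb - c)))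
    (quot_tendsto : ∀ {g : H → H} {A : H →L[ℝ] H},
      HasFDerivAt g A xb → ∀ t : ℕ → ℝ, (∀ n, 0 < t n) → Tendsto t atTop (nhds 0) →
      ∀ v : ℕ → H, Tendsto v atTop (nhds y) →
      Tendsto (fun n => (t n)⁻¹ • (g (xb + t n • v n) - g xb)) atTop (nhds (A y))) :
    {w : H | (y, w) ∈ {z : (H × H) | ∃ t : ℕ → ℝ, ∃ s : ℕ → (H × H), (∀ n, 0 < t n) ∧
        Tendsto t atTop (nhds 0) ∧ Tendsto s atTop (nhds z) ∧
        ∀ n, (xb, P xb) + t n • s n ∈ {p : H × H | p.2 = P p.1}}} =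
      {(r / ‖xb - c‖) • (y - (⟪xb - c, y⟫ / ‖xb - c‖ ^ 2) • (xb - c))} := by
  set g : H → H := fun x => c + (r / ‖x - c‖) • (x - c) with hgdef
  obtain ⟨A, hA, hAy⟩ := hasFDeriv_g
  have hPg : P xb = g xb := projFormula xb hx
  ext w
  simp only [Set.mem_setOf_eq, Set.mem_singleton_iff]
  rw [← hAy y]
  constructor
  · rintro ⟨t, s, htpos, ht0, hs, hmem⟩
    have hs1 : Tendsto (fun n => (s n).1) atTop (nhds y) :=
      (continuous_fst.tendsto _).comp hs
    have hs2 : Tendsto (fun n => (s n).2) atTop (nhds w) :=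
      (continuous_snd.tendsto _).comp hs
    have hts1 : Tendsto (fun n => t n • (s n).1) atTop (nhds (0 : H)) := by
      have := ht0.smul hs1; rwa [zero_smul] at this
    have hx1 : Tendsto (fun n => xb + t n • (s n).1) atTop (nhds xb) := by
      have := tendsto_const_nhds.add hts1 (f := fun _ : ℕ => xb) (x := atTop)
      rwa [add_zero] at this
    have hnorm : Tendsto (fun n => ‖xb + t n • (s n).1 - c‖) atTop (nhds ‖xb - c‖) :=
      (hx1.sub_const c).norm
    have hev : ∀ᶠ n in atTop, r < ‖xb + t n • (s n).1 - c‖ :=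
      hnorm.eventually_const_lt hx
    have hs2eq : ∀ᶠ n in atTop,
        (s n).2 = (t n)⁻¹ • (g (xb + t n • (s n).1) - g xb) := by
      filter_upwards [hev] with n hn
      have hmemn := hmem n
      simp only [Set.mem_setOf_eq, Prod.snd_add, Prod.fst_add, Prod.smul_snd,
        Prod.smul_fst] at hmemn
      have : P xb + t n • (s n).2 = g (xb + t n • (s n).1) := by
        rw [hmemn, projFormula _ hn]
      rw [hPg] at this
      have h2 : t n • (s n).2 = g (xb + t n • (s n).1) - g xb := by
        rw [← this]; abel
      rw [← h2, smul_smul, inv_mul_cancel₀ (htpos n).ne', one_smul]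
    have hlim := quot_tendsto hA t htpos ht0 (fun n => (s n).1) hs1
    exact tendsto_nhds_unique (hs2.congr' hs2eq) hlim
  · rintro rfl
    set δ : ℝ := (‖xb - c‖ - r) / (‖y‖ + 1) with hδ
    have hδ0 : 0 < δ := by
      apply div_pos (by linarith) (by positivity)
    set t : ℕ → ℝ := fun n => δ / (n + 1) with ht
    have htpos : ∀ n, 0 < t n := fun n => by positivity
    have ht0 : Tendsto t atTop (nhds 0) := by
      rw [ht]
      have : Tendsto (fun n : ℕ => 1 / ((n : ℝ) + 1)) atTop (nhds 0) :=
        tendsto_one_div_add_atTop_nhds_zero_nat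
      have h2 := this.const_mul δ
      rw [mul_zero] at h2
      refine h2.congr fun n => ?_
      field_simp
    have hout : ∀ n, r < ‖xb + t n • y - c‖ := by
      intro n
      have htle : t n ≤ δ := by
        rw [ht]
        apply div_le_self hδ0.le (by push_cast; linarith [Nat.cast_nonneg (α := ℝ) n])
      have h1 : t n * ‖y‖ < ‖xb - c‖ - r := by
        calc t n * ‖y‖ ≤ δ * ‖y‖ := by
              apply mul_le_mul_of_nonneg_right htle (norm_nonneg _)
          _ < ‖xb - c‖ - r := by
              rw [hδ, div_mul_eq_mul_div, div_lt_iff₀ (by positivity)]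
              nlinarith [norm_nonneg y]
      have h2 : ‖xb - c‖ ≤ ‖xb + t n • y - c‖ + t n * ‖y‖ := by
        calc ‖xb - c‖ = ‖(xb + t n • y - c) - t n • y‖ := by congr 1; abel
          _ ≤ ‖xb + t n • y - c‖ + ‖t n • y‖ := norm_sub_le _ _
          _ = ‖xb + t n • y - c‖ + t n * ‖y‖ := by
              rw [norm_smul, Real.norm_eq_abs, abs_of_pos (htpos n)]
      linarith
    refine ⟨t, fun n => (y, (t n)⁻¹ • (g (xb + t n • y) - g xb)), htpos, ht0, ?_, ?_⟩
    · apply Tendsto.prodMk_nhds tendsto_const_nhds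
      exact quot_tendsto hA t htpos ht0 (fun _ => y) tendsto_const_nhds
    · intro n
      show (P xb) + t n • ((t n)⁻¹ • (g (xb + t n • y) - g xb)) = P (xb + t n • y)
      rw [smul_smul, mul_inv_cancel₀ (htpos n).ne', one_smul, hPg,
        projFormula _ (hout n)]
      simp only [hgdef]
      abel

end Aux

variable {H : Type*} [NormedAddCommGroup H] [InnerProductSpace ℝ H] [CompleteSpace H]

theorem stmt16 (c : H) (r : ℝ) (hr : 0 < r) (xb : H) (hx : r < ‖xb - c‖)
    (P : H → H) (hP : IsMetricProj (closedBall c r) P) (y : H) :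
    {w : H | (y, w) ∈ bouligandTangentCone {p : H × H | p.2 = P p.1} (xb, P xb)} =
      {(r / ‖xb - c‖) • (y - (⟪xb - c, y⟫ / ‖xb - c‖ ^ 2) • (xb - c))} := by
  have hnec : xb ≠ c := by
    intro h; rw [h, sub_self, norm_zero] at hx; linarith
  exact main c r hr xb hx P hP y (projFormula c r hr P hP) (hasFDeriv_g c r xb hnec)
    (fun {g A} hA t h1 h2 v hv => quot_tendsto hA t h1 h2 v y hv)
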